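/- For any finite collection B of bi-step vectors, the Lebesgue measure of the Manhattan region M(B) = ∪_{b∈B} N_b equals (Σ_{b ∈ B̄} ∏_{i : b_i = 1}(k_i − 1)) / ∏_{i=1}^d (k_i λ_i), which equals the sampling density of the Manhattan set M(B) (the number of Manhattan sample points per fundamental cell divided by the cell volume). -/

import Mathlib

open Set MeasureTheory

/-- `t` is an integer multiple of `a`. -/
def isMul (a t : ℝ) : Prop := ∃ n : ℤ, t = n * a

/-- Bi-step lattice `L_b`. -/
def biLat {d : ℕ} (lam : Fin d → ℝ) (k : Fin d → ℤ) (b : Fin d → Bool) :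
    Set (Fin d → ℝ) :=
  {t | ∀ i, if b i then isMul (lam i) (t i) else isMul ((k i : ℝ) * lam i) (t i)}

/-- Fundamental cell `∏ [0, k_i λ_i)`. -/
def Fcell {d : ℕ} (lam : Fin d → ℝ) (k : Fin d → ℤ) : Set (Fin d → ℝ) :=
  {t | ∀ i, 0 ≤ t i ∧ t i < (k i : ℝ) * lam i}

/-- Nyquist region `N_b` of the bi-step lattice `L_b`. -/
def nyq {d : ℕ} (lam : Fin d → ℝ) (k : Fin d → ℤ) (b : Fin d → Bool) :
    Set (Fin d → ℝ) :=
  {u | ∀ i, if b i then |u i| < 1 / (2 * lam i)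
       else |u i| < 1 / (2 * ((k i : ℝ) * lam i))}

lemma disjoint_pi_of_coord {d : ℕ} {f g : Fin d → Set ℝ} (i : Fin d)
    (h : Disjoint (f i) (g i)) : Disjoint (Set.pi univ f) (Set.pi univ g) := by
  rw [Set.disjoint_left]
  intro x hx hy
  exact Set.disjoint_left.mp h (hx i trivial) (hy i trivial)

open Classical in
theorem stmt19 {d : ℕ} (hd : 1 ≤ d) (lam : Fin d → ℝ) (k : Fin d → ℤ)
    (hlam : ∀ i, 0 < lam i) (hk : ∀ i, 1 < k i)
    (B : Finset (Fin d → Bool)) :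
    volume (⋃ b ∈ B, nyq lam k b) =
      ENNReal.ofReal
        ((∑ b' : Fin d → Bool,
            if ∃ b ∈ B, b' ≤ b then ∏ i, (if b' i then ((k i : ℝ) - 1) else 1) else 0) /
          ∏ i, ((k i : ℝ) * lam i)) ∧
    (((⋃ b ∈ B, biLat lam k b) ∩ Fcell lam k).ncard : ℝ) / ∏ i, ((k i : ℝ) * lam i) =
      (∑ b' : Fin d → Bool,
          if ∃ b ∈ B, b' ≤ b then ∏ i, (if b' i then ((k i : ℝ) - 1) else 1) else 0) /
        ∏ i, ((k i : ℝ) * lam i) := by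
  classical
  have hlamne : ∀ i, lam i ≠ 0 := fun i => (hlam i).ne'
  have hkR : ∀ i, (1:ℝ) < (k i : ℝ) := fun i => by exact_mod_cast hk i
  have hkpos : ∀ i, (0:ℝ) < (k i : ℝ) := fun i => lt_trans one_pos (hkR i)
  have hklam : ∀ i, 0 < (k i : ℝ) * lam i := fun i => mul_pos (hkpos i) (hlam i)
  set D : ℝ := ∏ i, ((k i : ℝ) * lam i) with hD
  set w : (Fin d → Bool) → ℝ := fun b' => ∏ i, (if b' i then ((k i : ℝ) - 1) else 1) with hw
  set C : Finset (Fin d → Bool) := Finset.univ.filter (fun b' => ∃ b ∈ B, b' ≤ b) with hC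
  have hwnn : ∀ b', 0 ≤ w b' := by
    intro b'
    apply Finset.prod_nonneg
    intro i _
    cases b' i <;> simp <;> linarith [hkR i]
  have hsum : (∑ b' : Fin d → Bool,
      if ∃ b ∈ B, b' ≤ b then ∏ i, (if b' i then ((k i : ℝ) - 1) else 1) else 0)
      = ∑ b' ∈ C, w b' := by
    rw [hC, Finset.sum_filter]
  -- interval pieces
  set sm : Fin d → Set ℝ := fun i =>
    Ioo (-(1/(2*((k i:ℝ)*lam i)))) (1/(2*((k i:ℝ)*lam i))) with hsm
  set bg : Fin d → Set ℝ := fun i => Ioo (-(1/(2*lam i))) (1/(2*lam i)) with hbg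
  set P : Fin d → Bool → Set ℝ := fun i c => if c then bg i \ sm i else sm i with hP
  have hsub : ∀ i, sm i ⊆ bg i := by
    intro i
    apply Ioo_subset_Ioo
    · have h1 : 1/(2*((k i:ℝ)*lam i)) ≤ 1/(2*lam i) := by
        apply one_div_le_one_div_of_le (by linarith [hlam i])
        nlinarith [hlam i, hkR i]
      linarith
    · apply one_div_le_one_div_of_le (by linarith [hlam i])
      nlinarith [hlam i, hkR i]
  have hPsub : ∀ i c, P i c ⊆ bg i := by
    intro i c
    cases c
    · simpa [hP] using hsub i
    · simp [hP, Set.diff_subset]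
  have hnyq : ∀ b, nyq lam k b = Set.pi univ (fun i => if b i then bg i else sm i) := by
    intro b; ext u
    simp only [nyq, mem_setOf_eq, Set.mem_pi, mem_univ, forall_true_left]
    refine forall_congr' fun i => ?_
    cases hbi : b i <;> simp [hsm, hbg, abs_lt, mem_Ioo]
  have hunion : (⋃ b ∈ B, nyq lam k b) = ⋃ b' ∈ C, Set.pi univ (fun i => P i (b' i)) := by
    ext u
    simp only [mem_iUnion, exists_prop]
    constructor
    · rintro ⟨b, hb, hu⟩
      rw [hnyq] at hu
      refine ⟨fun i => decide (u i ∈ bg i \ sm i), ?_, ?_⟩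
      · rw [hC, Finset.mem_filter]
        refine ⟨Finset.mem_univ _, b, hb, ?_⟩
        intro i
        cases hbi : b i
        · have hus : u i ∈ sm i := by
            have h0 : u i ∈ (if b i = true then bg i else sm i) := hu i trivial
            simp only [hbi, Bool.false_eq_true, if_false] at h0
            exact h0
          have hdec : decide (u i ∈ bg i \ sm i) = false := by
            simp only [decide_eq_false_iff_not]
            intro hmem
            exact hmem.2 hus
          show decide (u i ∈ bg i \ sm i) ≤ false
          rw [hdec]
        · show decide (u i ∈ bg i \ sm i) ≤ true
          exact Bool.le_true _
      · intro i _
        by_cases hmem : u i ∈ bg i \ sm i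
        · simp [hP, hmem]
        · have hus : u i ∈ sm i := by
            have hui : u i ∈ (if b i = true then bg i else sm i) := hu i trivial
            cases hbi : b i
            · simpa only [hbi, Bool.false_eq_true, if_false] using hui
            · rw [hbi, if_pos rfl] at hui
              by_contra hns
              exact hmem ⟨hui, hns⟩
          show u i ∈ P i (decide (u i ∈ bg i \ sm i))
          have hdec2 : decide (u i ∈ bg i \ sm i) = false := by
            simp only [decide_eq_false_iff_not]; exact hmem
          rw [hdec2]
          exact hus
    · rintro ⟨b', hb'C, hu⟩
      rw [hC, Finset.mem_filter] at hb'C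
      obtain ⟨-, b, hb, hle⟩ := hb'C
      refine ⟨b, hb, ?_⟩
      rw [hnyq]
      intro i _
      have hui : u i ∈ P i (b' i) := hu i trivial
      show u i ∈ if b i = true then bg i else sm i
      cases hbi : b i
      · have hb'i : b' i = false := by
          have h2 := hle i
          rw [hbi] at h2
          cases hb2 : b' i
          · rfl
          · rw [hb2] at h2; exact absurd h2 (by simp)
        rw [hb'i] at hui
        simp only [Bool.false_eq_true, if_false]
        exact hui
      · simp only [if_true]
        exact hPsub i (b' i) hui
  have hmeasP : ∀ i (c : Bool), MeasurableSet (P i c) := by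
    intro i c
    cases c
    · exact measurableSet_Ioo
    · exact measurableSet_Ioo.diff measurableSet_Ioo
  have hmeas : ∀ b' : Fin d → Bool, MeasurableSet (Set.pi univ (fun i => P i (b' i))) := by
    intro b'
    apply MeasurableSet.univ_pi
    intro i
    exact hmeasP i (b' i)
  have hdisj : (↑C : Set (Fin d → Bool)).PairwiseDisjoint
      (fun b' => Set.pi univ (fun i => P i (b' i))) := by
    intro x _ y _ hxy
    obtain ⟨i, hi⟩ : ∃ i, x i ≠ y i := by
      by_contra h; push_neg at h; exact hxy (funext h)
    apply disjoint_pi_of_coord i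
    have hd1 : Disjoint (bg i \ sm i) (sm i) := by
      rw [Set.disjoint_left]; rintro a ⟨-, h2⟩ h3; exact h2 h3
    have key : ∀ c c' : Bool, c ≠ c' → Disjoint (P i c) (P i c') := by
      intro c c' hcc
      cases c <;> cases c'
      · exact absurd rfl hcc
      · exact hd1.symm
      · exact hd1
      · exact absurd rfl hcc
    exact key _ _ hi
  have hvolsm : ∀ i, volume (sm i) = ENNReal.ofReal (1 / ((k i:ℝ) * lam i)) := by
    intro i
    rw [hsm]
    simp only [Real.volume_Ioo]
    congr 1
    field_simp [(hklam i).ne', hlamne i, (hkpos i).ne']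
    ring
  have hvolbg : ∀ i, volume (bg i) = ENNReal.ofReal (1 / lam i) := by
    intro i
    rw [hbg]
    simp only [Real.volume_Ioo]
    congr 1
    field_simp [hlamne i]
    ring
  have hfracnn : ∀ i (c : Bool), 0 ≤ (if c then (k i:ℝ) - 1 else 1) / ((k i:ℝ) * lam i) := by
    intro i c
    apply div_nonneg _ (hklam i).le
    cases c
    · norm_num
    · simp only [if_true]
      linarith [hkR i]
  have hvolP : ∀ i (c : Bool), volume (P i c) =
      ENNReal.ofReal ((if c then (k i:ℝ) - 1 else 1) / ((k i:ℝ) * lam i)) := by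
    intro i c
    cases c
    · have hv := hvolsm i
      simp only [Bool.false_eq_true, if_false]
      exact hv
    · simp only [hP, if_pos rfl]
      rw [measure_diff (hsub i) measurableSet_Ioo.nullMeasurableSet
        (by rw [hvolsm]; exact ENNReal.ofReal_ne_top)]
      rw [hvolsm, hvolbg, ← ENNReal.ofReal_sub _ (by
        apply div_nonneg (by norm_num) (hklam i).le)]
      congr 1
      field_simp [hlamne i, (hkpos i).ne']
      simp
  have hvol : ∀ b' : Fin d → Bool,
      volume (Set.pi univ (fun i => P i (b' i))) = ENNReal.ofReal (w b' / D) := by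
    intro b'
    rw [volume_pi_pi]
    calc (∏ i, volume (P i (b' i)))
        = ∏ i, ENNReal.ofReal ((if b' i then (k i:ℝ) - 1 else 1) / ((k i:ℝ) * lam i)) := by
          exact Finset.prod_congr rfl fun i _ => hvolP i (b' i)
      _ = ENNReal.ofReal (∏ i, ((if b' i then (k i:ℝ) - 1 else 1) / ((k i:ℝ) * lam i))) := by
          rw [ENNReal.ofReal_prod_of_nonneg]
          intro i _
          exact hfracnn i (b' i)
      _ = ENNReal.ofReal (w b' / D) := by
          rw [Finset.prod_div_distrib]
  have part1 : volume (⋃ b ∈ B, nyq lam k b) =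
      ENNReal.ofReal ((∑ b' ∈ C, w b') / D) := by
    rw [hunion, measure_biUnion_finset hdisj (fun b' _ => hmeas b')]
    rw [Finset.sum_congr rfl (fun b' _ => hvol b')]
    rw [Finset.sum_div, ENNReal.ofReal_sum_of_nonneg]
    intro b' _
    have := hwnn b'
    have hDpos : 0 < D := Finset.prod_pos (fun i _ => hklam i)
    positivity
  -- Part 2
  set e : (Fin d → ℤ) → (Fin d → ℝ) := fun n i => (n i : ℝ) * lam i with he'
  have he : Function.Injective e := by
    intro n m h
    funext i
    have h1 := congrFun h i
    have h2 : (n i : ℝ) = m i := mul_right_cancel₀ (hlamne i) h1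
    exact_mod_cast h2
  set S : Finset (Fin d → ℤ) :=
    (Fintype.piFinset fun i => Finset.Ico (0:ℤ) (k i)).filter
      (fun n => ∃ b ∈ B, (fun i => decide (n i ≠ 0)) ≤ b) with hS
  have hset : (⋃ b ∈ B, biLat lam k b) ∩ Fcell lam k = ↑(S.image e) := by
    ext t
    simp only [mem_inter_iff, mem_iUnion, exists_prop, Finset.coe_image, Set.mem_image,
      Finset.mem_coe, hS, Finset.mem_filter, Fintype.mem_piFinset, Finset.mem_Ico]
    constructor
    · rintro ⟨⟨b, hb, hbl⟩, hf⟩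
      simp only [biLat, mem_setOf_eq] at hbl
      have hex : ∀ i, ∃ m : ℤ, t i = m * lam i ∧ (b i = false → (k i) ∣ m) := by
        intro i
        have hi := hbl i
        cases hbi : b i
        · rw [hbi, if_neg (by simp)] at hi
          obtain ⟨m, hm⟩ := hi
          refine ⟨m * k i, ?_, fun _ => ⟨m, mul_comm m (k i)⟩⟩
          rw [hm]; push_cast; ring
        · rw [hbi, if_pos rfl] at hi
          obtain ⟨m, hm⟩ := hi
          exact ⟨m, hm, fun h => by simp at h⟩
      choose n hn1 hn2 using hex
      have hbound : ∀ i, 0 ≤ n i ∧ n i < k i := by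
        intro i
        obtain ⟨h0, h1⟩ := hf i
        rw [hn1 i] at h0 h1
        constructor
        · have hnn : (0:ℝ) ≤ (n i : ℝ) := by
            by_contra hlt
            push_neg at hlt
            nlinarith [hlam i]
          exact_mod_cast hnn
        · have : (n i : ℝ) < (k i : ℝ) := lt_of_mul_lt_mul_right h1 (hlam i).le
          exact_mod_cast this
      refine ⟨n, ⟨⟨fun i => hbound i, b, hb, ?_⟩, ?_⟩⟩
      · intro i
        cases hbi : b i
        · have hni : n i = 0 := by
            by_contra hne
            have hdvd := hn2 i hbi
            have hpos : 0 < n i := lt_of_le_of_ne (hbound i).1 (Ne.symm hne)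
            have := Int.le_of_dvd hpos hdvd
            linarith [(hbound i).2]
          simp [hni]
        · simp
      · funext i
        exact (hn1 i).symm
    · rintro ⟨n, ⟨⟨hbd, b, hb, hsupp⟩, rfl⟩⟩
      refine ⟨⟨b, hb, ?_⟩, ?_⟩
      · simp only [biLat, mem_setOf_eq]
        intro i
        cases hbi : b i
        · rw [if_neg (by simp)]
          have hni : n i = 0 := by
            have h2 : decide (n i ≠ 0) ≤ b i := hsupp i
            rw [hbi] at h2
            cases hdn : decide (n i ≠ 0)
            · simpa using hdn
            · rw [hdn] at h2; exact absurd h2 (by simp)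
          exact ⟨0, by simp [he', hni]⟩
        · rw [if_pos rfl]
          exact ⟨n i, rfl⟩
      · intro i
        refine ⟨mul_nonneg (by exact_mod_cast (hbd i).1) (hlam i).le, ?_⟩
        have : (n i : ℝ) < (k i : ℝ) := by exact_mod_cast (hbd i).2
        exact mul_lt_mul_of_pos_right this (hlam i)
  have hfib : ∀ b' : Fin d → Bool,
      ((S.filter (fun n => (fun i => decide (n i ≠ 0)) = b')).card : ℝ) =
        if ∃ b ∈ B, b' ≤ b then w b' else 0 := by
    intro b'
    by_cases hC' : ∃ b ∈ B, b' ≤ b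
    · rw [if_pos hC']
      have hEq : S.filter (fun n => (fun i => decide (n i ≠ 0)) = b') =
          Fintype.piFinset (fun i => if b' i then Finset.Ico (1:ℤ) (k i) else {0}) := by
        ext n
        simp only [hS, Finset.mem_filter, Fintype.mem_piFinset, Finset.mem_Ico]
        constructor
        · rintro ⟨⟨hbd, -⟩, hsupp⟩ 
          intro i
          have hi := congrFun hsupp i
          cases hb'i : b' i
          · rw [hb'i, decide_eq_false_iff_not, not_not] at hi
            simp [hb'i, hi]
          · rw [hb'i, decide_eq_true_eq] at hi
            have h1 : 1 ≤ n i := lt_of_le_of_ne (hbd i).1 (Ne.symm hi)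
            simp [hb'i, Finset.mem_Ico, h1, (hbd i).2]
        · intro h
          have hbd : ∀ i, 0 ≤ n i ∧ n i < k i := by
            intro i
            have hi := h i
            cases hb'i : b' i <;> rw [hb'i] at hi <;> simp [Finset.mem_Ico] at hi
            · exact ⟨le_of_eq hi.symm, by rw [hi]; exact lt_trans one_pos (hk i)⟩
            · exact ⟨by linarith [hi.1], hi.2⟩
          have hsupp : (fun i => decide (n i ≠ 0)) = b' := by
            funext i
            have hi := h i
            cases hb'i : b' i <;> rw [hb'i] at hi <;> simp [Finset.mem_Ico] at hi ⊢
            · exact hi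
            · intro h0; rw [h0] at hi; linarith [hi.1]
          exact ⟨⟨hbd, by rw [hsupp]; exact hC'⟩, hsupp⟩
      rw [hEq, Fintype.card_piFinset]
      push_cast
      rw [hw]
      apply Finset.prod_congr rfl
      intro i _
      have h1 : (((k i - 1).toNat : ℕ) : ℝ) = (k i : ℝ) - 1 := by
        have h0 : (0:ℤ) ≤ k i - 1 := by linarith [hk i]
        have h2 := Int.toNat_of_nonneg h0
        exact_mod_cast congrArg (fun z : ℤ => (z : ℝ)) h2
      cases hb'i : b' i
      · simp
      · simp only [if_pos rfl, Int.card_Ico]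
        simpa using h1
    · rw [if_neg hC']
      simp only [Nat.cast_eq_zero, Finset.card_eq_zero]
      rw [Finset.filter_eq_empty_iff]
      intro n hn
      rw [hS, Finset.mem_filter] at hn
      obtain ⟨-, bb, hbb, hle⟩ := hn
      intro hEq
      exact hC' ⟨bb, hbb, hEq ▸ hle⟩
  have hcard : ((((⋃ b ∈ B, biLat lam k b) ∩ Fcell lam k).ncard : ℕ) : ℝ) = ∑ b' ∈ C, w b' := by
    rw [hset, ncard_coe_finset, Finset.card_image_of_injective _ he]
    rw [Finset.card_eq_sum_card_fiberwise
      (f := fun n => fun i => decide (n i ≠ 0)) (t := Finset.univ) (fun _ _ => Finset.mem_univ _)]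
    push_cast
    rw [Finset.sum_congr rfl (fun b' _ => hfib b')]
    rw [hC, Finset.sum_filter]
  constructor
  · rw [part1, hsum]
  · rw [hsum, ← hcard]
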